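/- arXiv:2505.12353 — 2 statements merged into one kernel-verified Lean document; each statement's English description precedes it below -/
import Mathlib

section
/- Let f = g ∘ h where g : ℝ → ℝ is continuously differentiable and h : ℝ^p → ℝ is differentiable and positively homogeneous of degree α > 0 (i.e., h(tθ) = t^α h(θ) for all t > 0). Fix θ with h(θ) ≠ 0. Then ∫₀¹ ∇(g∘h)(tθ) dt = ((g(h(θ)) − g(0)) / (α h(θ))) · ∇h(θ). -/
open MeasureTheory Set

variable {F : Type*} [NormedAddCommGroup F] [InnerProductSpace ℝ F] [CompleteSpace F]

lemma grad_comp (g : ℝ → ℝ) (h : F → ℝ) (x : F)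
    (hg : DifferentiableAt ℝ g (h x)) (hh : DifferentiableAt ℝ h x) :
    gradient (g ∘ h) x = deriv g (h x) • gradient h x := by
  have H : HasFDerivAt (g ∘ h) (deriv g (h x) • fderiv ℝ h x) x :=
    hg.hasDerivAt.comp_hasFDerivAt x hh.hasFDerivAt
  rw [gradient, H.fderiv, _root_.map_smul, gradient]

lemma grad_homog (h : F → ℝ) (α : ℝ) (hh : Differentiable ℝ h)
    (hhom : ∀ t : ℝ, 0 < t → ∀ θ, h (t • θ) = t ^ α * h θ)
    (t : ℝ) (ht : 0 < t) (θ : F) :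
    gradient h (t • θ) = t ^ (α - 1) • gradient h θ := by
  have h1 : HasFDerivAt (fun x : F => h (t • x)) ((fderiv ℝ h (t • θ)).comp (t • ContinuousLinearMap.id ℝ F)) θ := by
    have : HasFDerivAt (fun x : F => t • x) (t • ContinuousLinearMap.id ℝ F) θ :=
      ((t • ContinuousLinearMap.id ℝ F).hasFDerivAt (x := θ)).congr_fderiv rfl
    exact (hh (t • θ)).hasFDerivAt.comp θ this
  have h2 : HasFDerivAt (fun x : F => h (t • x)) (t ^ α • fderiv ℝ h θ) θ := by
    have : HasFDerivAt (fun x : F => t ^ α * h x) (t ^ α • fderiv ℝ h θ) θ :=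
      ((hh θ).hasFDerivAt.const_smul (t ^ α) : HasFDerivAt (fun x => t ^ α • h x) _ _)
    exact this.congr_of_eventuallyEq (Filter.Eventually.of_forall fun x => (hhom t ht x))
  have key : t • fderiv ℝ h (t • θ) = t ^ α • fderiv ℝ h θ := by
    have := h1.unique h2
    rw [← this]; ext v
    simp [mul_comm]
  have : fderiv ℝ h (t • θ) = t ^ (α - 1) • fderiv ℝ h θ := by
    have ht' : t ≠ 0 := ht.ne'
    have : fderiv ℝ h (t • θ) = t⁻¹ • (t ^ α • fderiv ℝ h θ) := by
      rw [← key, smul_smul, inv_mul_cancel₀ ht', one_smul]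
    rw [this, smul_smul, Real.rpow_sub ht, Real.rpow_one, div_eq_inv_mul]
  rw [gradient, this, _root_.map_smul, gradient]

theorem adjoint_of_composition {p : ℕ} (g : ℝ → ℝ) (h : EuclideanSpace ℝ (Fin p) → ℝ)
    (α : ℝ) (hg : ContDiff ℝ 1 g) (hh : Differentiable ℝ h) (hα : 0 < α)
    (hhom : ∀ t : ℝ, 0 < t → ∀ θ, h (t • θ) = t ^ α * h θ)
    (θ : EuclideanSpace ℝ (Fin p)) (hθ : h θ ≠ 0)
    (hint : IntervalIntegrable (fun t : ℝ => gradient (g ∘ h) (t • θ))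
      MeasureTheory.volume 0 1) :
    ∫ t in (0:ℝ)..1, gradient (g ∘ h) (t • θ)
      = ((g (h θ) - g 0) / (α * h θ)) • gradient h θ := by
  have hgd : Differentiable ℝ g := hg.differentiable one_ne_zero
  set v := gradient h θ with hv
  set c : ℝ → ℝ := fun t => deriv g (t ^ α * h θ) * t ^ (α - 1) with hc
  have hgrad : ∀ t ∈ Ioc (0:ℝ) 1, gradient (g ∘ h) (t • θ) = c t • v := by
    intro t ht
    rw [grad_comp g h _ (hgd _) (hh _), grad_homog h α hh hhom t ht.1, hhom t ht.1, smul_smul]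
  have hLHS : ∫ t in (0:ℝ)..1, gradient (g ∘ h) (t • θ) = (∫ t in (0:ℝ)..1, c t) • v := by
    rw [← intervalIntegral.integral_smul_const]
    apply intervalIntegral.integral_congr_ae
    filter_upwards with t ht
    exact hgrad t (by rwa [Set.uIoc_of_le (by norm_num : (0:ℝ) ≤ 1)] at ht)
  rw [hLHS]
  by_cases hv0 : v = 0
  · simp [hv0]
  -- integrability of c
  have hcint : IntervalIntegrable c MeasureTheory.volume 0 1 := by
    rw [intervalIntegrable_iff_integrableOn_Ioc_of_le (by norm_num)]
    have h1 : MeasureTheory.IntegrableOn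
        (fun t : ℝ => (‖v‖ ^ 2)⁻¹ * (innerSL ℝ v) (gradient (g ∘ h) (t • θ)))
        (Ioc 0 1) MeasureTheory.volume := by
      have := ((innerSL ℝ v).integrable_comp
        ((intervalIntegrable_iff_integrableOn_Ioc_of_le (by norm_num)).1 hint))
      exact this.const_mul _
    refine h1.congr_fun (fun t ht => ?_) measurableSet_Ioc
    dsimp only; rw [hgrad t ht]
    simp only [innerSL_apply_apply, real_inner_smul_right, real_inner_self_eq_norm_sq]
    field_simp [hv0]
  -- FTC
  have hαθ : α * h θ ≠ 0 := mul_ne_zero hα.ne' hθ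
  have hFTC : ∫ t in (0:ℝ)..1, (α * h θ) * c t = g (h θ) - g 0 := by
    have key := intervalIntegral.integral_eq_sub_of_hasDeriv_right_of_le (a := 0) (b := 1)
      (f := fun t => g (t ^ α * h θ)) (f' := fun t => (α * h θ) * c t) (by norm_num)
      (by
        apply hgd.continuous.comp_continuousOn
        exact ContinuousOn.mul
          (fun t _ => (Real.continuousAt_rpow_const t α (Or.inr hα.le)).continuousWithinAt)
          continuousOn_const)
      (by
        intro t ht
        have h1 : HasDerivAt (fun t : ℝ => t ^ α * h θ) (α * t ^ (α - 1) * h θ) t :=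
          (Real.hasDerivAt_rpow_const (Or.inl ht.1.ne')).mul_const _
        have h2 := ((hgd _).hasDerivAt.comp t h1)
        have h3 : deriv g (t ^ α * h θ) * (α * t ^ (α - 1) * h θ) = (α * h θ) * c t := by
          rw [hc]; ring
        rw [h3] at h2
        exact h2.hasDerivWithinAt)
      (hcint.const_mul _)
    rw [key]
    norm_num [Real.zero_rpow hα.ne']
  rw [intervalIntegral.integral_const_mul] at hFTC
  have : ∫ t in (0:ℝ)..1, c t = (g (h θ) - g 0) / (α * h θ) := by
    field_simp [hαθ] at hFTC ⊢
    linarith [hFTC]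
  rw [this]
end

section
/- Let h : ℝ^p → ℝ be differentiable and positively homogeneous of degree α > 0, and let g : ℝ → ℝ be continuously differentiable. If θ satisfies h(θ) = 0, then ∫₀¹ ∇(g∘h)(tθ) dt = (g'(0)/α) · ∇h(θ). -/
open InnerProductSpace intervalIntegral

theorem adjoint_of_composition_zero {p : ℕ} (g : ℝ → ℝ) (h : EuclideanSpace ℝ (Fin p) → ℝ)
    (α : ℝ) (hg : ContDiff ℝ 1 g) (hh : Differentiable ℝ h) (hα : 0 < α)
    (hhom : ∀ t : ℝ, 0 < t → ∀ θ, h (t • θ) = t ^ α * h θ)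
    (θ : EuclideanSpace ℝ (Fin p)) (hθ : h θ = 0) :
    ∫ t in (0:ℝ)..1, gradient (g ∘ h) (t • θ)
      = (deriv g 0 / α) • gradient h θ := by
  have hgd : Differentiable ℝ g := hg.differentiable one_ne_zero
  -- fderiv of h is homogeneous
  have hA : ∀ t : ℝ, 0 < t → fderiv ℝ h (t • θ) = t ^ (α - 1) • fderiv ℝ h θ := by
    intro t ht
    have h1 : HasFDerivAt (fun x => h (t • x))
        (t • fderiv ℝ h (t • θ)) θ := by
      have := (hh (t • θ)).hasFDerivAt.comp θ
        ((hasFDerivAt_id θ).const_smul t)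
      refine this.congr_fderiv ?_
      ext v
      simp [ContinuousLinearMap.smul_apply]
    have h2 : HasFDerivAt (fun x => h (t • x))
        (t ^ α • fderiv ℝ h θ) θ := by
      have : (fun x => h (t • x)) = fun x => t ^ α * h x := by
        funext x; exact hhom t ht x
      rw [this]
      exact ((hh θ).hasFDerivAt.const_mul (t ^ α))
    have heq := h1.unique h2
    have ht0 : t ≠ 0 := ne_of_gt ht
    have : fderiv ℝ h (t • θ) = t⁻¹ • t ^ α • fderiv ℝ h θ := by
      rw [← heq, smul_smul, inv_mul_cancel₀ ht0, one_smul]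
    rw [this, smul_smul, Real.rpow_sub ht, Real.rpow_one, div_eq_mul_inv, mul_comm]
  -- gradient of composition on (0,1]
  have key : ∀ t : ℝ, 0 < t →
      gradient (g ∘ h) (t • θ) = (deriv g 0 * t ^ (α - 1)) • gradient h θ := by
    intro t ht
    have hcomp : fderiv ℝ (g ∘ h) (t • θ)
        = (fderiv ℝ g (h (t • θ))).comp (fderiv ℝ h (t • θ)) :=
      fderiv_comp _ (hgd _) (hh _)
    have hht : h (t • θ) = 0 := by rw [hhom t ht, hθ, mul_zero]
    have hscal : (fderiv ℝ g (h (t • θ))).comp (fderiv ℝ h (t • θ))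
        = (deriv g 0 * t ^ (α - 1)) • fderiv ℝ h θ := by
      rw [hht, hA t ht]
      ext v
      simp [ContinuousLinearMap.smul_apply, fderiv_apply_one_eq_deriv]
      ring
    unfold gradient
    rw [hcomp, hscal, map_smul]
  -- rewrite integrand a.e. and compute
  have hcong : ∫ t in (0:ℝ)..1, gradient (g ∘ h) (t • θ)
      = ∫ t in (0:ℝ)..1, (deriv g 0 * t ^ (α - 1)) • gradient h θ := by
    apply intervalIntegral.integral_congr_ae
    filter_upwards with t ht
    rw [Set.uIoc_of_le (by norm_num : (0:ℝ) ≤ 1)] at ht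
    exact key t ht.1
  rw [hcong, intervalIntegral.integral_smul_const]
  congr 1
  rw [intervalIntegral.integral_const_mul]
  have : ∫ t in (0:ℝ)..1, t ^ (α - 1) = 1 / α := by
    rw [integral_rpow (Or.inl (by linarith))]
    rw [sub_add_cancel, Real.one_rpow, Real.zero_rpow (ne_of_gt hα)]
    ring
  rw [this]
  ring
end
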